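/- Let α < 0, 1 ≤ p ≤ ∞. For ℓ ∈ Z^d define ∨_ℓ = {k ∈ Z^d : supp η_k^α ∩ supp η_ℓ ≠ ∅}, where {η_ℓ} is a standard uniform (modulation-space) partition with supp η_ℓ ⊆ ℓ + [−1,1]^d and {η_k^α} is an α-BAPU with supp η_k^α ⊆ B(⟨k⟩^{α/(1−α)}k, C⟨k⟩^{α/(1−α)}). Then #∨_ℓ ≤ C_d ⟨ℓ⟩^{−αd}. -/

import Mathlib

noncomputable def jbracket {d : ℕ} (x : EuclideanSpace ℝ (Fin d)) : ℝ :=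
  Real.sqrt (1 + ‖x‖ ^ 2)

noncomputable def latt {d : ℕ} (k : Fin d → ℤ) : EuclideanSpace ℝ (Fin d) :=
  (EuclideanSpace.equiv (Fin d) ℝ).symm (fun i => (k i : ℝ))

open Real
open scoped RealInnerProductSpace

lemma jb_one_le {d : ℕ} (x : EuclideanSpace ℝ (Fin d)) : 1 ≤ jbracket x := by
  have h : Real.sqrt 1 ≤ Real.sqrt (1 + ‖x‖^2) := Real.sqrt_le_sqrt (by nlinarith [sq_nonneg ‖x‖])
  rw [Real.sqrt_one] at h
  exact h

lemma jb_pos {d : ℕ} (x : EuclideanSpace ℝ (Fin d)) : 0 < jbracket x :=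
  lt_of_lt_of_le one_pos (jb_one_le x)

lemma norm_le_jb {d : ℕ} (x : EuclideanSpace ℝ (Fin d)) : ‖x‖ ≤ jbracket x := by
  have h : Real.sqrt (‖x‖^2) ≤ Real.sqrt (1 + ‖x‖^2) := Real.sqrt_le_sqrt (by nlinarith)
  rwa [Real.sqrt_sq (norm_nonneg x)] at h

lemma jb_le {d : ℕ} (x : EuclideanSpace ℝ (Fin d)) : jbracket x ≤ 1 + ‖x‖ := by
  have h : Real.sqrt (1 + ‖x‖^2) ≤ Real.sqrt ((1+‖x‖)^2) :=
    Real.sqrt_le_sqrt (by nlinarith [norm_nonneg x])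
  rwa [Real.sqrt_sq (by positivity)] at h

lemma coord_le {d : ℕ} (v : EuclideanSpace ℝ (Fin d)) (i : Fin d) : |v i| ≤ ‖v‖ := by
  rw [EuclideanSpace.norm_eq, ← Real.sqrt_sq_eq_abs]
  apply Real.sqrt_le_sqrt
  calc (v i)^2 = ‖v i‖^2 := by rw [Real.norm_eq_abs, sq_abs]
  _ ≤ ∑ j, ‖v j‖^2 :=
      Finset.single_le_sum (f := fun j => ‖v j‖^2) (fun j _ => by positivity) (Finset.mem_univ i)

lemma oneD (β : ℝ) (hβ : -1 < β) (hβ0 : β < 0) {a b : ℝ} (hb : 0 ≤ b) (hab : b ≤ a) :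
    (1+β) * (1+a^2) ^ (β/2) * (a - b) ≤ a * (1+a^2)^(β/2) - b * (1+b^2)^(β/2) := by
  have key : ∀ t : ℝ, HasDerivAt (fun t : ℝ => t * (1+t^2)^(β/2))
      ((1+t^2)^(β/2) + t * (2*t * (β/2) * (1+t^2)^(β/2-1))) t := by
    intro t
    have h1 : HasDerivAt (fun t : ℝ => 1 + t^2) (2*t) t := by
      simpa using ((hasDerivAt_pow 2 t).const_add 1)
    have h2 : HasDerivAt (fun t : ℝ => (1+t^2)^(β/2)) (2*t * (β/2) * (1+t^2)^(β/2-1)) t :=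
      h1.rpow_const (Or.inl (by positivity))
    exact ((hasDerivAt_id t).mul h2).congr_deriv (by simp)
  set m := (1+β) * (1+a^2) ^ (β/2) with hm
  have hmono : MonotoneOn (fun t : ℝ => t * (1+t^2)^(β/2) - m * t) (Set.Icc b a) := by
    apply monotoneOn_of_deriv_nonneg (convex_Icc b a)
    · exact ((continuous_id.mul ((continuous_const.add (continuous_pow 2)).rpow_const
        (fun t => Or.inl (by positivity : (1:ℝ) + t^2 ≠ 0)))).sub (continuous_const.mul continuous_id)).continuousOn
    · exact fun t ht => (((key t).sub ((hasDerivAt_id t).const_mul m)).differentiableAt).differentiableWithinAt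
    · intro t ht
      rw [interior_Icc] at ht
      have ht0 : 0 ≤ t := le_trans hb ht.1.le
      have hta : t ≤ a := ht.2.le
      have hd : deriv (fun t : ℝ => t * (1+t^2)^(β/2) - m * t) t
          = (1+t^2)^(β/2) + t * (2*t * (β/2) * (1+t^2)^(β/2-1)) - m :=
        (((key t).sub ((hasDerivAt_id t).const_mul m)).deriv).trans (by ring)
      rw [hd]
      have h1t : (0:ℝ) < 1 + t^2 := by positivity
      have hsplit : (1+t^2)^(β/2) = (1+t^2) * (1+t^2)^(β/2-1) := by
        rw [← Real.rpow_one_add' (le_of_lt h1t) (by intro h; simp at h; linarith)]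
        ring_nf
      have hD : (1+t^2)^(β/2) + t * (2*t * (β/2) * (1+t^2)^(β/2-1))
          = (1 + (1+β)*t^2) * (1+t^2)^(β/2-1) := by
        rw [hsplit]; ring
      rw [hD]
      have hge : (1+β) * (1+t^2) ≤ 1 + (1+β)*t^2 := by nlinarith
      have hpow : 0 < (1+t^2)^(β/2-1) := Real.rpow_pos_of_pos h1t _
      have hmul : (1+β) * (1+t^2) * (1+t^2)^(β/2-1) ≤ (1 + (1+β)*t^2) * (1+t^2)^(β/2-1) :=
        mul_le_mul_of_nonneg_right hge hpow.le
      have h2 : (1+β) * (1+t^2)^(β/2) ≤ (1 + (1+β)*t^2) * (1+t^2)^(β/2-1) := by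
        calc (1+β) * (1+t^2)^(β/2) = (1+β) * ((1+t^2) * (1+t^2)^(β/2-1)) := by rw [← hsplit]
        _ = (1+β) * (1+t^2) * (1+t^2)^(β/2-1) := by ring
        _ ≤ _ := hmul
      have h3 : m ≤ (1+β) * (1+t^2)^(β/2) := by
        have : (1+a^2)^(β/2) ≤ (1+t^2)^(β/2) :=
          Real.rpow_le_rpow_of_nonpos (by positivity) (by nlinarith) (by linarith)
        exact mul_le_mul_of_nonneg_left this (by linarith)
      linarith
  have := hmono (Set.left_mem_Icc.2 hab) (Set.right_mem_Icc.2 hab) hab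
  simp only at this
  linarith

lemma jb_rpow {d : ℕ} (x : EuclideanSpace ℝ (Fin d)) (β : ℝ) :
    jbracket x ^ β = (1 + ‖x‖^2) ^ (β/2) := by
  rw [jbracket, Real.sqrt_eq_rpow, ← Real.rpow_mul (by positivity)]
  ring_nf

lemma mono_norm {d : ℕ} (β : ℝ) (hβ : -1 < β) (hβ0 : β < 0)
    (x y : EuclideanSpace ℝ (Fin d)) (h : ‖y‖ ≤ ‖x‖) :
    (1+β) * (jbracket x ^ β) * ‖x - y‖ ≤ ‖(jbracket x ^ β) • x - (jbracket y ^ β) • y‖ := by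
  set a := ‖x‖ with ha
  set b := ‖y‖ with hbdef
  have hb : 0 ≤ b := norm_nonneg y
  set φa := jbracket x ^ β with hφa
  set φb := jbracket y ^ β with hφb
  have hφa' : φa = (1+a^2)^(β/2) := jb_rpow x β
  have hφb' : φb = (1+b^2)^(β/2) := jb_rpow y β
  have hφapos : 0 < φa := by rw [hφa']; positivity
  have hφbpos : 0 < φb := by rw [hφb']; positivity
  have hφab : φa ≤ φb := by
    rw [hφa', hφb']
    exact Real.rpow_le_rpow_of_nonpos (by positivity) (by nlinarith) (by linarith)
  have hinner : (1+β) * φa * ‖x - y‖^2 ≤ ⟪φa • x - φb • y, x - y⟫ := by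
    have hexp : ⟪φa • x - φb • y, x - y⟫ = φa * a^2 - (φa + φb) * ⟪x, y⟫ + φb * b^2 := by
      rw [inner_sub_left, inner_sub_right, inner_sub_right, real_inner_smul_left,
        real_inner_smul_left, real_inner_smul_left, real_inner_smul_left,
        real_inner_self_eq_norm_sq, real_inner_self_eq_norm_sq, real_inner_comm y x]
      ring
    have hnsq : ‖x - y‖^2 = a^2 - 2 * ⟪x, y⟫ + b^2 := norm_sub_sq_real x y
    have hs : ⟪x, y⟫ ≤ a * b := real_inner_le_norm x y
    have h1 : 0 ≤ (a - b) * ((a*φa - b*φb) - (1+β)*φa*(a-b)) := by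
      apply mul_nonneg (by linarith)
      have := oneD β hβ hβ0 hb h
      rw [← hφa', ← hφb'] at this
      linarith
    have h2 : 0 ≤ (a*b - ⟪x, y⟫) * (φa + φb - 2*(1+β)*φa) := by
      apply mul_nonneg (by linarith)
      nlinarith
    rw [hexp, hnsq]
    nlinarith [h1, h2]
  have hcs : ⟪φa • x - φb • y, x - y⟫ ≤ ‖φa • x - φb • y‖ * ‖x - y‖ :=
    real_inner_le_norm _ _
  rcases eq_or_lt_of_le (norm_nonneg (x - y)) with h0 | h0
  · rw [← h0, mul_zero]; exact norm_nonneg _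
  · have hfin : (1+β) * φa * ‖x - y‖ * ‖x - y‖ ≤ ‖φa • x - φb • y‖ * ‖x - y‖ := by
      calc (1+β) * φa * ‖x - y‖ * ‖x - y‖ = (1+β) * φa * ‖x - y‖^2 := by ring
      _ ≤ _ := le_trans hinner hcs
    exact le_of_mul_le_mul_right hfin h0

set_option maxHeartbeats 1000000 in
/-- Counting bound: for `α < 0`, a unit cube at frequency `ℓ` meets at most
`≲ ⟨ℓ⟩^{−αd}` of the `α`-decomposition balls `B(⟨k⟩^{α/(1−α)}k, C⟨k⟩^{α/(1−α)})`. -/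
theorem stmt17 (d : ℕ) (hd : 1 ≤ d) (α : ℝ) (hα : α < 0) (C : ℝ) (hC : 0 < C)
    (η : (Fin d → ℤ) → EuclideanSpace ℝ (Fin d) → ℂ)
    (θ : (Fin d → ℤ) → EuclideanSpace ℝ (Fin d) → ℂ)
    (hηsupp : ∀ k, Function.support (η k) ⊆
      Metric.ball ((jbracket (latt k) ^ (α / (1 - α))) • latt k)
        (C * jbracket (latt k) ^ (α / (1 - α))))
    (hθsupp : ∀ ℓ, Function.support (θ ℓ) ⊆ {ξ | ∀ i, |ξ i - (ℓ i : ℝ)| ≤ 1}) :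
    ∃ Cd > 0, ∀ ℓ : Fin d → ℤ,
      {k : Fin d → ℤ |
          (Function.support (η k) ∩ Function.support (θ ℓ)).Nonempty}.Finite ∧
        ({k : Fin d → ℤ |
            (Function.support (η k) ∩ Function.support (θ ℓ)).Nonempty}.ncard : ℝ)
          ≤ Cd * jbracket (latt ℓ) ^ (-(α * d)) := by
  have h1α : (0:ℝ) < 1 - α := by linarith
  obtain ⟨β, hβdef⟩ : ∃ β : ℝ, β = α / (1 - α) := ⟨_, rfl⟩
  rw [← hβdef] at hηsupp
  have hβneg : β < 0 := by rw [hβdef]; exact div_neg_of_neg_of_pos hα h1α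
  have hβgt : -1 < β := by rw [hβdef, lt_div_iff₀ h1α]; linarith
  have h1β : 0 < 1 + β := by linarith
  have hβα : (1 + β) * α = β := by
    rw [hβdef]; field_simp; ring
  obtain ⟨C₁, hC₁def⟩ : ∃ x : ℝ, x = C + Real.sqrt d := ⟨_, rfl⟩
  have hC₁ : 0 < C₁ := by rw [hC₁def]; positivity
  obtain ⟨c, hcdef⟩ : ∃ x : ℝ, x = (2 + C₁) ^ α := ⟨_, rfl⟩
  have hcpos : 0 < c := hcdef ▸ Real.rpow_pos_of_pos (by linarith) α
  obtain ⟨K, hKdef⟩ : ∃ x : ℝ, x = max 1 (2 * C₁ / ((1 + β) * c)) := ⟨_, rfl⟩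
  have hK1 : (1:ℝ) ≤ K := hKdef ▸ le_max_left _ _
  have hKpos : (0:ℝ) < K := lt_of_lt_of_le one_pos hK1
  refine ⟨3^d * K^d, by positivity, ?_⟩
  intro ℓ
  obtain ⟨L, hLdef⟩ : ∃ x : ℝ, x = jbracket (latt ℓ) := ⟨_, rfl⟩
  rw [← hLdef]
  have hL1 : 1 ≤ L := hLdef ▸ jb_one_le _
  have hL0 : 0 < L := lt_of_lt_of_le one_pos hL1
  set S := {k : Fin d → ℤ |
      (Function.support (η k) ∩ Function.support (θ ℓ)).Nonempty} with hSdef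
  have hcore : ∀ k ∈ S, ‖(jbracket (latt k) ^ β) • latt k - latt ℓ‖ ≤ C₁ ∧
      c * L ^ α ≤ jbracket (latt k) ^ β := by
    rintro k ⟨ξ, hξη, hξθ⟩
    have h1 := hηsupp k hξη
    have h2 := hθsupp ℓ hξθ
    set u := jbracket (latt k) with hu
    have hu1 : 1 ≤ u := jb_one_le _
    have hu0 : 0 < u := lt_of_lt_of_le one_pos hu1
    have huβ : u ^ β ≤ 1 := Real.rpow_le_one_of_one_le_of_nonpos hu1 hβneg.le
    have huβ0 : 0 < u ^ β := Real.rpow_pos_of_pos hu0 β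
    have hd1 : dist ξ ((u ^ β) • latt k) < C * u ^ β := Metric.mem_ball.mp h1
    have hξℓ : ‖ξ - latt ℓ‖ ≤ Real.sqrt d := by
      rw [EuclideanSpace.norm_eq]
      apply Real.sqrt_le_sqrt
      calc ∑ i, ‖(ξ - latt ℓ) i‖^2 ≤ ∑ _i : Fin d, (1:ℝ) := by
            apply Finset.sum_le_sum
            intro i _
            have hco : (ξ - latt ℓ) i = ξ i - (ℓ i : ℝ) := rfl
            rw [hco, Real.norm_eq_abs]
            have := h2 i
            nlinarith [abs_nonneg (ξ i - (ℓ i:ℝ))]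
      _ = d := by simp
    have hi : ‖(u ^ β) • latt k - latt ℓ‖ ≤ C₁ := by
      have htri : ‖(u ^ β) • latt k - latt ℓ‖ ≤ ‖(u ^ β) • latt k - ξ‖ + ‖ξ - latt ℓ‖ :=
        norm_sub_le_norm_sub_add_norm_sub _ _ _
      have hdd : ‖(u ^ β) • latt k - ξ‖ ≤ C * u ^ β := by
        rw [← dist_eq_norm, dist_comm]
        exact hd1.le
      have hCu : C * u ^ β ≤ C := by nlinarith
      calc ‖(u ^ β) • latt k - latt ℓ‖ ≤ C * u ^ β + Real.sqrt d := by
            linarith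
      _ ≤ C₁ := by rw [hC₁def]; linarith
    refine ⟨hi, ?_⟩
    have hfk : ‖(u ^ β) • latt k‖ = u ^ β * ‖latt k‖ := by
      rw [norm_smul, Real.norm_eq_abs, abs_of_pos huβ0]
    have hbound : u ^ (1+β) ≤ (2 + C₁) * L := by
      have e1 : u ^ (1+β) = u^β * u := by
        rw [Real.rpow_add hu0, Real.rpow_one]; ring
      have e2 : u ≤ 1 + ‖latt k‖ := jb_le _
      have e3 : ‖(u^β) • latt k‖ ≤ ‖latt ℓ‖ + C₁ := by
        have h4 : ‖(u^β) • latt k‖ - ‖latt ℓ‖ ≤ ‖(u ^ β) • latt k - latt ℓ‖ :=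
          norm_sub_norm_le _ _
        linarith
      have e4 : ‖latt ℓ‖ ≤ L := hLdef ▸ norm_le_jb _
      have e5 : u^β * ‖latt k‖ ≤ ‖latt ℓ‖ + C₁ := by rw [← hfk]; exact e3
      calc u^(1+β) = u^β * u := e1
      _ ≤ u^β * (1 + ‖latt k‖) := mul_le_mul_of_nonneg_left e2 huβ0.le
      _ = u^β + u^β * ‖latt k‖ := by ring
      _ ≤ 1 + (L + C₁) := by linarith
      _ ≤ (2 + C₁) * L := by nlinarith
    have e5 : u ^ β = (u ^ (1+β)) ^ α := by
      rw [← Real.rpow_mul hu0.le, hβα]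
    rw [e5]
    have e6 : ((2+C₁) * L) ^ α ≤ (u^(1+β))^α :=
      Real.rpow_le_rpow_of_nonpos (Real.rpow_pos_of_pos hu0 _) hbound hα.le
    calc c * L^α = ((2+C₁)*L)^α := by
          rw [hcdef, Real.mul_rpow (by linarith) hL0.le]
    _ ≤ _ := e6
  have hpair : ∀ k ∈ S, ∀ k' ∈ S, ‖latt k - latt k'‖ ≤ K * L ^ (-α) := by
    intro k hk k' hk'
    obtain ⟨hi, hii⟩ := hcore k hk
    obtain ⟨hi', hii'⟩ := hcore k' hk'
    have h2C : ‖(jbracket (latt k) ^ β) • latt k - (jbracket (latt k') ^ β) • latt k'‖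
        ≤ 2 * C₁ := by
      have htri : ‖(jbracket (latt k) ^ β) • latt k - (jbracket (latt k') ^ β) • latt k'‖
          ≤ ‖(jbracket (latt k) ^ β) • latt k - latt ℓ‖
            + ‖latt ℓ - (jbracket (latt k') ^ β) • latt k'‖ :=
        norm_sub_le_norm_sub_add_norm_sub _ _ _
      rw [norm_sub_rev (latt ℓ)] at htri
      linarith
    have hmono : (1+β) * (c * L^α) * ‖latt k - latt k'‖ ≤ 2 * C₁ := by
      rcases le_total ‖latt k'‖ ‖latt k‖ with hle | hle
      · have hmn := mono_norm β hβgt hβneg (latt k) (latt k') hle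
        have hmul : (1+β) * (c*L^α) * ‖latt k - latt k'‖
            ≤ (1+β) * (jbracket (latt k) ^ β) * ‖latt k - latt k'‖ :=
          mul_le_mul_of_nonneg_right (mul_le_mul_of_nonneg_left hii h1β.le) (norm_nonneg _)
        linarith
      · have hmn := mono_norm β hβgt hβneg (latt k') (latt k) hle
        rw [norm_sub_rev (latt k'), norm_sub_rev ((jbracket (latt k') ^ β) • latt k')] at hmn
        have hmul : (1+β) * (c*L^α) * ‖latt k - latt k'‖
            ≤ (1+β) * (jbracket (latt k') ^ β) * ‖latt k - latt k'‖ :=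
          mul_le_mul_of_nonneg_right (mul_le_mul_of_nonneg_left hii' h1β.le) (norm_nonneg _)
        linarith
    have hLα : 0 < L ^ α := Real.rpow_pos_of_pos hL0 α
    have hLnα : 0 < L ^ (-α) := Real.rpow_pos_of_pos hL0 _
    have hLL : L ^ α * L ^ (-α) = 1 := by
      rw [← Real.rpow_add hL0]; simp
    have ht : L^α * ‖latt k - latt k'‖ ≤ 2*C₁/((1+β)*c) := by
      rw [le_div_iff₀ (by positivity)]
      nlinarith [hmono]
    calc ‖latt k - latt k'‖ = (L^α * ‖latt k - latt k'‖) * L^(-α) := by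
          rw [mul_comm (L^α) _, mul_assoc, hLL, mul_one]
    _ ≤ (2*C₁/((1+β)*c)) * L^(-α) := mul_le_mul_of_nonneg_right ht hLnα.le
    _ ≤ K * L^(-α) :=
        mul_le_mul_of_nonneg_right (by rw [hKdef]; exact le_max_right _ _) hLnα.le
  obtain ⟨T, hTdef⟩ : ∃ x : ℝ, x = K * L ^ (-α) := ⟨_, rfl⟩
  have hLnα1 : 1 ≤ L ^ (-α) := by
    calc (1:ℝ) = L ^ (0:ℝ) := by rw [Real.rpow_zero]
    _ ≤ L ^ (-α) := Real.rpow_le_rpow_of_exponent_le hL1 (by linarith)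
  have hT1 : 1 ≤ T := by
    rw [hTdef]
    calc (1:ℝ) = 1 * 1 := by ring
    _ ≤ K * L ^ (-α) := mul_le_mul hK1 hLnα1 one_pos.le hKpos.le
  have hT0 : 0 < T := lt_of_lt_of_le one_pos hT1
  have hexp : (L ^ (-α)) ^ d = L ^ (-(α * d)) := by
    rw [← Real.rpow_natCast (L ^ (-α)) d, ← Real.rpow_mul hL0.le]
    norm_num
  by_cases hS : S.Nonempty
  · obtain ⟨k₀, hk₀⟩ := hS
    obtain ⟨N, hNdef⟩ : ∃ n : ℤ, n = ⌊T⌋ := ⟨_, rfl⟩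
    have hN1 : 1 ≤ N := by
      rw [hNdef]
      exact Int.le_floor.mpr (by exact_mod_cast hT1)
    have hNT : (N:ℝ) ≤ T := hNdef ▸ Int.floor_le T
    have hsub : S ⊆ ↑(Fintype.piFinset fun i => Finset.Icc (k₀ i - N) (k₀ i + N)) := by
      intro k hk
      simp only [Finset.coe_sort_coe, Finset.mem_coe, Fintype.mem_piFinset, Finset.mem_Icc]
      intro i
      have hnk := (hpair k hk k₀ hk₀).trans (le_of_eq hTdef.symm)
      have hco : (latt k - latt k₀) i = (k i : ℝ) - (k₀ i : ℝ) := rfl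
      have hcoord : |(k i : ℝ) - (k₀ i : ℝ)| ≤ T := by
        rw [← hco]
        exact le_trans (coord_le _ i) hnk
      obtain ⟨ha1, ha2⟩ := abs_le.mp hcoord
      have hb1 : (k i - k₀ i : ℤ) ≤ N := hNdef ▸ Int.le_floor.mpr (by push_cast; linarith)
      have hb2 : (k₀ i - k i : ℤ) ≤ N := hNdef ▸ Int.le_floor.mpr (by push_cast; linarith)
      omega
    have hfin : S.Finite := Set.Finite.subset (Finset.finite_toSet _) hsub
    refine ⟨hfin, ?_⟩
    have hcard : S.ncard ≤ (Fintype.piFinset fun i => Finset.Icc (k₀ i - N) (k₀ i + N)).card := by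
      rw [← Set.ncard_coe_finset]
      exact Set.ncard_le_ncard hsub (Finset.finite_toSet _)
    have hcard2 : (Fintype.piFinset fun i => Finset.Icc (k₀ i - N) (k₀ i + N)).card
        = ((2*N+1).toNat)^d := by
      rw [Fintype.card_piFinset]
      have : ∀ i : Fin d, (Finset.Icc (k₀ i - N) (k₀ i + N)).card = (2*N+1).toNat := by
        intro i
        rw [Int.card_Icc]
        congr 1
        ring
      rw [Finset.prod_congr rfl (fun i _ => this i)]
      simp
    have htn : ((2*N+1 : ℤ).toNat : ℝ) = 2*(N:ℝ)+1 := by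
      have h0 : (0:ℤ) ≤ 2*N+1 := by omega
      have h1 : ((2*N+1).toNat : ℤ) = 2*N+1 := Int.toNat_of_nonneg h0
      exact_mod_cast congrArg (fun z : ℤ => (z:ℝ)) h1
    have h3T : ((2*N+1 : ℤ).toNat : ℝ) ≤ 3 * T := by
      rw [htn]; linarith
    calc (S.ncard : ℝ) ≤ (((2*N+1).toNat : ℝ))^d := by
          have : (S.ncard : ℝ) ≤ ((((2*N+1).toNat)^d : ℕ) : ℝ) := by
            exact_mod_cast le_trans hcard (le_of_eq hcard2)
          rwa [Nat.cast_pow] at this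
    _ ≤ (3 * T)^d := pow_le_pow_left₀ (by positivity) h3T d
    _ = 3^d * K^d * (L ^ (-α))^d := by rw [hTdef]; ring
    _ = 3^d * K^d * L ^ (-(α * d)) := by rw [hexp]
  · rw [Set.not_nonempty_iff_eq_empty] at hS
    rw [hS]
    refine ⟨Set.finite_empty, ?_⟩
    simp only [Set.ncard_empty, Nat.cast_zero]
    positivity
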